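/- Let p be a prime and, for i = 1, 2, let g_i(X) ∈ ℤ_{p²}[X] be monic with irreducible reduction modulo p and all coefficients in {0, 1, …, p−1}, and let u₁(X), u₃(X) and u₂(X), u₄(X) be polynomials in ℤ_{p²}[X] with coefficients in {0, 1, …, p−1}, not ≡ 0 (mod p), with deg u₁, deg u₃ < deg g₁ and deg u₂, deg u₄ < deg g₂. Set R₁ = ℤ_{p²}[X, Y]/(g₁(X) − u₃(X)Y, Y² − p·u₁(X), pY), R₂ = ℤ_{p²}[X, Y]/(g₂(X) − u₄(X)Y, Y² − p·u₂(X), pY), and K_i = ℤ_{p²}[X]/(p, g_i(X)). If σ : R₁ → R₂ is a ring isomorphism, then σ induces a field isomorphism τ : K₁ → K₂ and there exist polynomials v₂(X), u₅(X) ∈ ℤ_{p²}[X] not in the ideal (p, g₂(X)) such that σ(\overline{g₁(X)}) = \overline{u₅(X)} · \overline{g₂(X)} holds in R₂ and \overline{u₂(X)} = \overline{v₂(X)}² · τ(\overline{u₁(X)}) holds in K₂. -/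

import Mathlib

set_option synthInstance.maxHeartbeats 1000000
set_option maxHeartbeats 1600000

open Polynomial

/-- The ideal `(g(X) − u'(X)·Y, Y² − p·u(X), pY)` of `ℤ_{p²}[X,Y]`, the latter modelled
as `Polynomial (Polynomial (ZMod (p^2)))`, the outer indeterminate being `Y` and the
inner one being `X`. -/
noncomputable def paperIdealI (p : ℕ) (g u' u : Polynomial (ZMod (p ^ 2))) :
    Ideal (Polynomial (Polynomial (ZMod (p ^ 2)))) :=
  Ideal.span
    ({Polynomial.C g - Polynomial.C u' * Polynomial.X,
      Polynomial.X ^ 2 -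
        (p : Polynomial (Polynomial (ZMod (p ^ 2)))) * Polynomial.C u,
      (p : Polynomial (Polynomial (ZMod (p ^ 2)))) * Polynomial.X} :
      Set (Polynomial (Polynomial (ZMod (p ^ 2)))))

/-- The ideal `(p, g(X))` of `ℤ_{p²}[X]`; the quotient by it is the residue field
`K = ℤ_{p²}[X]/(p, g(X))`. -/
noncomputable def paperIdealK (p : ℕ) (g : Polynomial (ZMod (p ^ 2))) :
    Ideal (Polynomial (ZMod (p ^ 2))) :=
  Ideal.span ({(p : Polynomial (ZMod (p ^ 2))), g} : Set (Polynomial (ZMod (p ^ 2))))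

/-- The canonical map `ℤ_{p²}[X,Y] → K = ℤ_{p²}[X]/(p, g(X))` sending `Y ↦ 0` and
`X ↦ X̄`; composed with the quotient map `ℤ_{p²}[X,Y] → Rᵢ` being inverted, it gives
the residue map `πᵢ : Rᵢ → Kᵢ`. -/
noncomputable def paperKappa (p : ℕ) (g : Polynomial (ZMod (p ^ 2))) :
    Polynomial (Polynomial (ZMod (p ^ 2))) →+* Polynomial (ZMod (p ^ 2)) ⧸ paperIdealK p g :=
  (Ideal.Quotient.mk (paperIdealK p g)).comp
    (Polynomial.evalRingHom (0 : Polynomial (ZMod (p ^ 2))))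

section RL
variable {Q : Type*} [CommRing Q]

variable {Q : Type*} [CommRing Q]

lemma ringL1 (G U U' Cc Kk x pp : Q)
    (q1 : G = U' * x) (q2 : x^2 = pp*U) (q3 : pp*x = 0)
    (qck : U'*Cc + G*Kk = 1) (qp2 : pp^2 = 0) :
    Cc * (1 + G*Kk + G^2*Kk^2) * G = x := by
  linear_combination (Cc * (1 + G*Kk + G^2*Kk^2) - Kk^3 * (G^2 + G*U'*x + U'^2*x^2) * x) * q1
    + (-(Kk^3 * U'^3 * x^2)) * q2
    + (-(Kk^3 * U'^3 * U * x)) * q3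
    + ((1 + G*Kk + G^2*Kk^2) * x) * qck

lemma ringL2 (G U' x pp : Q) (q1 : G = U' * x) (q3 : pp*x = 0) : pp * G = 0 := by
  linear_combination pp * q1 + U' * q3

lemma ringL3 (G U U' x pp : Q) (q1 : G = U' * x) (q2 : x^2 = pp*U) :
    G^2 = pp * (U * U'^2) := by
  linear_combination (G + U'*x) * q1 + U'^2 * q2

lemma ringL4a (jg ju ju' jc jk pp : Q)
    (j2 : jg^2 = pp*(ju*ju'^2))
    (jck : ju'*jc + jg*jk = 1) (jp2 : pp^2 = 0) :
    jg - ju' * (jc*(1+jg*jk+jg^2*jk^2)*jg) = 0 := by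
  linear_combination (jk^3*(jg^2 + pp*(ju*ju'^2))) * j2
    - ((1+jg*jk+jg^2*jk^2)*jg) * jck + (jk^3*(ju*ju'^2)^2) * jp2

lemma ringL4b (jg ju ju' jc jk pp : Q)
    (j1 : pp*jg = 0) (j2 : jg^2 = pp*(ju*ju'^2))
    (jck : ju'*jc + jg*jk = 1) :
    (jc*(1+jg*jk+jg^2*jk^2)*jg)^2 - pp*ju = 0 := by
  linear_combination (-(ju*jg^2*jk^3*(1 + ju'*jc*(1+jg*jk+jg^2*jk^2)))) * j1
    + (jc^2*(1+jg*jk+jg^2*jk^2)^2) * j2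
    + (pp*ju*(1+jg*jk+jg^2*jk^2)*(1 + ju'*jc*(1+jg*jk+jg^2*jk^2))) * jck

lemma ringL4c (jg jc jk pp : Q) (j1 : pp*jg = 0) :
    pp*(jc*(1+jg*jk+jg^2*jk^2)*jg) = 0 := by
  linear_combination (jc*(1+jg*jk+jg^2*jk^2)) * j1
end RL

section Aux2
variable (p : ℕ)

local notation "R" => ZMod (p^2)
local notation "P" => Polynomial (ZMod (p^2))
local notation "r" => ZMod.castHom (dvd_pow_self p two_ne_zero) (ZMod p)


lemma auxPsq : ((p : ZMod (p^2)))^2 = 0 := by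
  have : ((p : ZMod (p^2)))^2 = ((p^2 : ℕ) : ZMod (p^2)) := by push_cast; ring
  rw [this, ZMod.natCast_self]

lemma auxPsqP : ((p : ℕ) : Polynomial (ZMod (p^2)))^2 = 0 := by
  have : ((p : ℕ) : Polynomial (ZMod (p^2))) = C ((p : ZMod (p^2))) := by
    simp [map_natCast]
  rw [this, ← map_pow, auxPsq, map_zero]

lemma auxCastDvd (hp : p.Prime) (b : ZMod (p^2))
    (hb : ZMod.castHom (dvd_pow_self p two_ne_zero) (ZMod p) b = 0) :
    (p : ZMod (p^2)) ∣ b := by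
  haveI := Fact.mk hp
  haveI : NeZero (p^2) := ⟨pow_ne_zero 2 hp.ne_zero⟩
  have hb' : b = ((b.val : ℕ) : ZMod (p^2)) := (ZMod.natCast_rightInverse b).symm
  rw [hb', map_natCast] at hb
  have : p ∣ b.val := (ZMod.natCast_eq_zero_iff _ _).mp hb
  obtain ⟨c, hc⟩ := this
  exact ⟨(c : ZMod (p^2)), by rw [hb', hc]; push_cast; ring⟩

lemma auxPmulDvd (hp : p.Prime) (b : ZMod (p^2))
    (hb : (p : ZMod (p^2)) * b = 0) : (p : ZMod (p^2)) ∣ b := by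
  haveI := Fact.mk hp
  haveI : NeZero (p^2) := ⟨pow_ne_zero 2 hp.ne_zero⟩
  have hb' : b = ((b.val : ℕ) : ZMod (p^2)) := (ZMod.natCast_rightInverse b).symm
  have : ((p * b.val : ℕ) : ZMod (p^2)) = 0 := by push_cast; rw [← hb']; exact hb
  have h2 : p^2 ∣ p * b.val := (ZMod.natCast_eq_zero_iff _ _).mp this
  have h3 : p ∣ b.val := by
    rcases h2 with ⟨c, hc⟩
    exact ⟨c, Nat.eq_of_mul_eq_mul_left hp.pos (by rw [hc]; ring)⟩
  obtain ⟨c, hc⟩ := h3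
  exact ⟨(c : ZMod (p^2)), by rw [hb', hc]; push_cast; ring⟩

lemma auxRSurj (hp : p.Prime) : Function.Surjective (r : ZMod (p^2) →+* ZMod p) := by
  haveI := Fact.mk hp
  intro y
  exact ⟨((y.val : ℕ) : ZMod (p^2)), by rw [map_natCast]; exact ZMod.natCast_rightInverse y⟩

lemma auxMapZero (hp : p.Prime) (x : P) :
    x.map (r : ZMod (p^2) →+* ZMod p) = 0 ↔ ∃ y, x = ((p:ℕ) : P) * y := by
  constructor
  · intro h
    have hd : C ((p : ZMod (p^2))) ∣ x := by
      rw [C_dvd_iff_dvd_coeff]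
      intro i
      apply auxCastDvd p hp
      have := congrArg (fun q => Polynomial.coeff q i) h
      simpa [coeff_map] using this
    obtain ⟨y, hy⟩ := hd
    exact ⟨y, by rw [hy, Polynomial.C_eq_natCast]⟩
  · rintro ⟨y, rfl⟩
    rw [Polynomial.map_mul]
    have : (((p:ℕ) : P)).map (r : ZMod (p^2) →+* ZMod p) = 0 := by
      rw [Polynomial.map_natCast]
      simp [ZMod.natCast_self]
    rw [this, zero_mul]

lemma auxPmulZero (hp : p.Prime) (x : P) (h : ((p:ℕ) : P) * x = 0) :
    ∃ y, x = ((p:ℕ) : P) * y := by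
  have hd : C ((p : ZMod (p^2))) ∣ x := by
    rw [C_dvd_iff_dvd_coeff]
    intro i
    apply auxPmulDvd p hp
    have h' : (C ((p : ZMod (p^2))) * x).coeff i = 0 := by
      rw [show C ((p : ZMod (p^2))) * x = ((p:ℕ) : P) * x by rw [Polynomial.C_eq_natCast], h]
      simp
    simpa [coeff_C_mul] using h'
  obtain ⟨y, hy⟩ := hd
  exact ⟨y, by rw [hy, Polynomial.C_eq_natCast]⟩

lemma auxMemSpanIffDvd (hp : p.Prime) (g f : P) :
    f ∈ Ideal.span {((p:ℕ) : P), g} ↔ (g.map (r : ZMod (p^2) →+* ZMod p)) ∣ (f.map (r : ZMod (p^2) →+* ZMod p)) := by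
  constructor
  · intro h
    obtain ⟨a, b, hab⟩ := Ideal.mem_span_pair.mp h
    refine ⟨b.map (r : ZMod (p^2) →+* ZMod p), ?_⟩
    have := congrArg (Polynomial.map (r : ZMod (p^2) →+* ZMod p)) hab
    have hz : (((p:ℕ) : P)).map (r : ZMod (p^2) →+* ZMod p) = 0 := by
      rw [Polynomial.map_natCast]; simp [ZMod.natCast_self]
    simp only [Polynomial.map_add, Polynomial.map_mul, hz, mul_zero, zero_add] at this
    rw [← this]; ring
  · rintro ⟨h, hh⟩
    obtain ⟨h', hh'⟩ := Polynomial.map_surjective _ (auxRSurj p hp) h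
    have : (f - g * h').map (r : ZMod (p^2) →+* ZMod p) = 0 := by
      simp only [Polynomial.map_sub, Polynomial.map_mul, hh', hh]
      ring
    obtain ⟨y, hy⟩ := (auxMapZero p hp _).mp this
    rw [Ideal.mem_span_pair]
    exact ⟨y, h', by linear_combination -hy⟩

lemma auxBezout (hp : p.Prime) (f g : P)
    (hco : IsCoprime (f.map (r : ZMod (p^2) →+* ZMod p)) (g.map (r : ZMod (p^2) →+* ZMod p))) :
    ∃ a b, f * a + g * b = 1 := by
  obtain ⟨a₀, b₀, hab⟩ := hco
  obtain ⟨A, hA⟩ := Polynomial.map_surjective _ (auxRSurj p hp) a₀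
  obtain ⟨B, hB⟩ := Polynomial.map_surjective _ (auxRSurj p hp) b₀
  have : (A * f + B * g - 1).map (r : ZMod (p^2) →+* ZMod p) = 0 := by
    simp only [Polynomial.map_sub, Polynomial.map_add, Polynomial.map_mul, hA, hB, Polynomial.map_one]
    linear_combination hab
  obtain ⟨δ, hδ⟩ := (auxMapZero p hp _).mp this
  have hp2 := auxPsqP p
  refine ⟨A * (1 - ((p:ℕ) : P) * δ), B * (1 - ((p:ℕ) : P) * δ), ?_⟩
  linear_combination (1 - ((p:ℕ) : P) * δ) * hδ - δ^2 * hp2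


lemma auxNotDvd (hp : p.Prime) (g u : P) (hg : g.Monic)
    (hu : u.map (r : ZMod (p^2) →+* ZMod p) ≠ 0) (hdeg : u.degree < g.degree) :
    ¬ (g.map (r : ZMod (p^2) →+* ZMod p)) ∣ (u.map (r : ZMod (p^2) →+* ZMod p)) := by
  haveI := Fact.mk hp
  intro hdvd
  have h1 : (g.map (r : ZMod (p^2) →+* ZMod p)).degree ≤ (u.map (r : ZMod (p^2) →+* ZMod p)).degree :=
    Polynomial.degree_le_of_dvd hdvd hu
  have h2 : (g.map (r : ZMod (p^2) →+* ZMod p)).degree = g.degree := hg.degree_map _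
  have h3 : (u.map (r : ZMod (p^2) →+* ZMod p)).degree ≤ u.degree := Polynomial.degree_map_le
  rw [h2] at h1
  exact absurd (lt_of_le_of_lt (le_trans h1 h3) hdeg) (lt_irrefl _)

lemma auxCoprime (hp : p.Prime) (g f : P)
    (hgi : Irreducible (g.map (r : ZMod (p^2) →+* ZMod p)))
    (hnd : ¬ (g.map (r : ZMod (p^2) →+* ZMod p)) ∣ (f.map (r : ZMod (p^2) →+* ZMod p))) :
    IsCoprime (f.map (r : ZMod (p^2) →+* ZMod p)) (g.map (r : ZMod (p^2) →+* ZMod p)) := by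
  haveI := Fact.mk hp
  exact ((hgi.coprime_iff_not_dvd).mpr hnd).symm

lemma auxPrimeMap (hp : p.Prime) (g : P)
    (hgi : Irreducible (g.map (r : ZMod (p^2) →+* ZMod p))) :
    Prime (g.map (r : ZMod (p^2) →+* ZMod p)) := by
  haveI := Fact.mk hp
  exact hgi.prime

lemma auxOneNotMem (hp : p.Prime) (g : P)
    (hgi : Irreducible (g.map (r : ZMod (p^2) →+* ZMod p))) :
    (1 : P) ∉ Ideal.span {((p:ℕ) : P), g} := by
  intro h
  have := (auxMemSpanIffDvd p hp g 1).mp h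
  rw [Polynomial.map_one] at this
  exact hgi.not_isUnit (isUnit_of_dvd_one this)

lemma auxUNotMem (hp : p.Prime) (g u : P) (hg : g.Monic)
    (hgi : Irreducible (g.map (r : ZMod (p^2) →+* ZMod p)))
    (hu : u.map (r : ZMod (p^2) →+* ZMod p) ≠ 0) (hdeg : u.degree < g.degree) :
    u ∉ Ideal.span {((p:ℕ) : P), g} := by
  intro h
  exact auxNotDvd p hp g u hg hu hdeg ((auxMemSpanIffDvd p hp g u).mp h)

lemma auxJmemSpan (hp : p.Prime) (g w f : P) (hg : g.Monic)
    (h : ((p:ℕ) : P) * f ∈ Ideal.span {((p:ℕ) : P) * g, g^2 - ((p:ℕ) : P) * w}) :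
    f ∈ Ideal.span {((p:ℕ) : P), g} := by
  haveI := Fact.mk hp
  obtain ⟨α, β, hab⟩ := Ideal.mem_span_pair.mp h
  have hz : (((p:ℕ) : P)).map (r : ZMod (p^2) →+* ZMod p) = 0 := by
    rw [Polynomial.map_natCast]; simp [ZMod.natCast_self]
  have hβ : (β.map (r : ZMod (p^2) →+* ZMod p)) * (g.map (r : ZMod (p^2) →+* ZMod p))^2 = 0 := by
    have := congrArg (Polynomial.map (r : ZMod (p^2) →+* ZMod p)) hab
    simp only [Polynomial.map_add, Polynomial.map_mul, Polynomial.map_sub, Polynomial.map_pow, hz,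
      mul_zero, zero_mul, zero_add, sub_zero] at this
    linear_combination this
  have hgne : (g.map (r : ZMod (p^2) →+* ZMod p)) ≠ 0 := (hg.map _).ne_zero
  have hβ0 : β.map (r : ZMod (p^2) →+* ZMod p) = 0 := by
    rcases mul_eq_zero.mp hβ with h' | h'
    · exact h'
    · exact absurd (pow_eq_zero_iff (n := 2) (by norm_num) |>.mp h') hgne
  obtain ⟨β₁, hβ₁⟩ := (auxMapZero p hp β).mp hβ0
  have hp2 := auxPsqP p
  have key : ((p:ℕ) : P) * (f - α * g - β₁ * g^2) = 0 := by
    linear_combination -hab + (g^2 - ((p:ℕ):P)*w) * hβ₁ + (-β₁*w) * hp2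
  obtain ⟨γ, hγ⟩ := auxPmulZero p hp _ key
  rw [Ideal.mem_span_pair]
  exact ⟨γ, α + β₁ * g, by linear_combination -hγ⟩



lemma auxWNotMem (hp : p.Prime) (g u u' : P) (hg : g.Monic)
    (hgi : Irreducible (g.map (r : ZMod (p^2) →+* ZMod p)))
    (hu : u.map (r : ZMod (p^2) →+* ZMod p) ≠ 0)
    (hu' : u'.map (r : ZMod (p^2) →+* ZMod p) ≠ 0)
    (hudeg : u.degree < g.degree) (hu'deg : u'.degree < g.degree) :
    u * u'^2 ∉ Ideal.span {((p:ℕ) : P), g} := by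
  haveI := Fact.mk hp
  intro h
  have hd := (auxMemSpanIffDvd p hp g _).mp h
  rw [Polynomial.map_mul, Polynomial.map_pow] at hd
  have hprime := auxPrimeMap p hp g hgi
  rcases hprime.dvd_mul.mp hd with h' | h'
  · exact auxNotDvd p hp g u hg hu hudeg h'
  · exact auxNotDvd p hp g u' hg hu' hu'deg (hprime.dvd_of_dvd_pow h')

lemma auxCube (hp : p.Prime) (g : P) (hg : g.Monic)
    (hgi : Irreducible (g.map (r : ZMod (p^2) →+* ZMod p)))
    (t : P ⧸ paperIdealK p g) (ht : t^3 = 0) : t = 0 := by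
  haveI := Fact.mk hp
  obtain ⟨f, rfl⟩ := Ideal.Quotient.mk_surjective t
  rw [← map_pow, Ideal.Quotient.eq_zero_iff_mem] at ht
  rw [Ideal.Quotient.eq_zero_iff_mem]
  rw [paperIdealK] at ht ⊢
  have hd := (auxMemSpanIffDvd p hp g _).mp ht
  rw [Polynomial.map_pow] at hd
  exact (auxMemSpanIffDvd p hp g f).mpr ((auxPrimeMap p hp g hgi).dvd_of_dvd_pow hd)

lemma auxModel (hp : p.Prime) (g u u' : P) (hg : g.Monic)
    (hgi : Irreducible (g.map (r : ZMod (p^2) →+* ZMod p)))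
    (hu' : u'.map (r : ZMod (p^2) →+* ZMod p) ≠ 0)
    (hu'deg : u'.degree < g.degree) :
    ∃ y₀ : P,
      (∀ F : Polynomial P, Ideal.Quotient.mk (paperIdealI p g u' u) F =
          Ideal.Quotient.mk (paperIdealI p g u' u) (Polynomial.C (F.eval y₀))) ∧
      (∀ f : P, Ideal.Quotient.mk (paperIdealI p g u' u) (Polynomial.C f) = 0 ↔
          f ∈ Ideal.span {((p:ℕ) : P) * g, g^2 - ((p:ℕ) : P) * (u * u'^2)}) := by
  obtain ⟨c, k, hck⟩ := auxBezout p hp u' g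
    (auxCoprime p hp g u' hgi (auxNotDvd p hp g u' hg hu' hu'deg))
  have hp2 : ((p:ℕ) : P)^2 = 0 := auxPsqP p
  set Jid : Ideal P := Ideal.span {((p:ℕ) : P) * g, g^2 - ((p:ℕ) : P) * (u * u'^2)} with hJid
  refine ⟨c * (1 + g*k + g^2*k^2) * g, ?_⟩
  set y₀ : P := c * (1 + g*k + g^2*k^2) * g with hy₀
  set mkI : Polynomial P →+* (Polynomial P ⧸ paperIdealI p g u' u) :=
    (Ideal.Quotient.mk (paperIdealI p g u' u)) with hmkI
  set γ : P →+* (Polynomial P ⧸ paperIdealI p g u' u) :=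
    mkI.comp (C : P →+* Polynomial P) with hγ
  -- quotient relations
  have q1 : γ g = γ u' * mkI X := by
    have h0 : mkI (C g - C u' * X) = 0 := by
      apply Ideal.Quotient.eq_zero_iff_mem.mpr
      rw [paperIdealI]; exact Ideal.subset_span (by simp)
    rw [map_sub, map_mul] at h0
    exact sub_eq_zero.mp h0
  have q2 : (mkI X)^2 = ((p:ℕ) : Polynomial P ⧸ paperIdealI p g u' u) * γ u := by
    have h0 : mkI (X^2 - ((p:ℕ) : Polynomial P) * C u) = 0 := by
      apply Ideal.Quotient.eq_zero_iff_mem.mpr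
      rw [paperIdealI]; exact Ideal.subset_span (by simp)
    rw [map_sub, map_mul, map_pow, map_natCast] at h0
    exact sub_eq_zero.mp h0
  have q3 : ((p:ℕ) : Polynomial P ⧸ paperIdealI p g u' u) * mkI X = 0 := by
    have h0 : mkI (((p:ℕ) : Polynomial P) * X) = 0 := by
      apply Ideal.Quotient.eq_zero_iff_mem.mpr
      rw [paperIdealI]; exact Ideal.subset_span (by simp)
    rwa [map_mul, map_natCast] at h0
  have qck : γ u' * γ c + γ g * γ k = 1 := by
    have h0 := congrArg γ hck
    rw [map_add, map_mul, map_mul, map_one] at h0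
    exact h0
  have qp2 : ((p:ℕ) : Polynomial P ⧸ paperIdealI p g u' u)^2 = 0 := by
    have h0 := congrArg γ hp2
    rw [map_pow, map_natCast, map_zero] at h0
    exact h0
  have hXy : mkI X = γ y₀ := by
    have hy : γ y₀ = γ c * (1 + γ g * γ k + (γ g)^2 * (γ k)^2) * γ g := by
      rw [hy₀]; simp [map_mul, map_add, map_pow, map_one]
    rw [hy]
    exact (ringL1 (γ g) (γ u) (γ u') (γ c) (γ k) (mkI X) _ q1 q2 q3 qck qp2).symm
  have E1 : ∀ F : Polynomial P, mkI F = mkI (C (F.eval y₀)) := by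
    have heq : mkI = γ.comp (evalRingHom y₀) := by
      apply Polynomial.ringHom_ext
      · intro a
        simp only [hγ, RingHom.comp_apply, coe_evalRingHom, eval_C]
      · simpa only [RingHom.comp_apply, coe_evalRingHom, eval_X] using hXy
    intro F
    conv_lhs => rw [heq]
    rfl
  refine ⟨E1, ?_⟩
  -- backwards direction helpers
  have hJ1 : γ (((p:ℕ) : P) * g) = 0 := by
    rw [map_mul, map_natCast]
    exact ringL2 (γ g) (γ u') (mkI X) _ q1 q3
  have hJ2 : γ (g^2 - ((p:ℕ) : P) * (u * u'^2)) = 0 := by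
    rw [map_sub, map_mul, map_pow, map_natCast, map_mul, map_pow]
    rw [sub_eq_zero]
    exact ringL3 (γ g) (γ u) (γ u') (mkI X) _ q1 q2
  -- theta
  set δ : P →+* (P ⧸ Jid) := Ideal.Quotient.mk Jid with hδ
  set θ : Polynomial P →+* (P ⧸ Jid) := δ.comp (evalRingHom y₀) with hθ
  have j1 : ((p:ℕ) : P ⧸ Jid) * δ g = 0 := by
    have h0 : δ (((p:ℕ) : P) * g) = 0 :=
      Ideal.Quotient.eq_zero_iff_mem.mpr (Ideal.subset_span (by simp [hJid]))
    rwa [map_mul, map_natCast] at h0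
  have j2 : (δ g)^2 = ((p:ℕ) : P ⧸ Jid) * (δ u * (δ u')^2) := by
    have h0 : δ (g^2 - ((p:ℕ) : P) * (u * u'^2)) = 0 :=
      Ideal.Quotient.eq_zero_iff_mem.mpr (Ideal.subset_span (by simp [hJid]))
    rw [map_sub, map_mul, map_pow, map_natCast, map_mul, map_pow] at h0
    exact sub_eq_zero.mp h0
  have jck : δ u' * δ c + δ g * δ k = 1 := by
    have h0 := congrArg δ hck
    rw [map_add, map_mul, map_mul, map_one] at h0
    exact h0
  have jp2 : ((p:ℕ) : P ⧸ Jid)^2 = 0 := by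
    have h0 := congrArg δ hp2
    rw [map_pow, map_natCast, map_zero] at h0
    exact h0
  have hIker : paperIdealI p g u' u ≤ RingHom.ker θ := by
    rw [paperIdealI, Ideal.span_le]
    intro x hx
    simp only [Set.mem_insert_iff, Set.mem_singleton_iff] at hx
    have hδy : δ y₀ = δ c * (1 + δ g * δ k + (δ g)^2 * (δ k)^2) * δ g := by
      rw [hy₀]; simp [map_mul, map_add, map_pow, map_one]
    rcases hx with rfl | rfl | rfl <;> rw [SetLike.mem_coe, RingHom.mem_ker]
    · have : θ (C g - C u' * X) = δ g - δ u' * δ y₀ := by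
        simp only [hθ, RingHom.comp_apply, coe_evalRingHom, eval_sub, eval_mul, eval_C, eval_X,
          map_sub, map_mul]
      rw [this, hδy]
      exact ringL4a (δ g) (δ u) (δ u') (δ c) (δ k) _ j2 jck jp2
    · have : θ (X^2 - ((p:ℕ) : Polynomial P) * C u) = (δ y₀)^2 - ((p:ℕ) : P ⧸ Jid) * δ u := by
        simp only [hθ, RingHom.comp_apply, coe_evalRingHom, eval_sub, eval_mul, eval_pow, eval_C,
          eval_X, eval_natCast, map_sub, map_mul, map_pow, map_natCast]
      rw [this, hδy]
      exact ringL4b (δ g) (δ u) (δ u') (δ c) (δ k) _ j1 j2 jck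
    · have : θ (((p:ℕ) : Polynomial P) * X) = ((p:ℕ) : P ⧸ Jid) * δ y₀ := by
        simp only [hθ, RingHom.comp_apply, coe_evalRingHom, eval_mul, eval_natCast, eval_X,
          map_mul, map_natCast]
      rw [this, hδy]
      exact ringL4c (δ g) (δ c) (δ k) _ j1
  intro f
  constructor
  · intro h
    have hCf : C f ∈ paperIdealI p g u' u := Ideal.Quotient.eq_zero_iff_mem.mp h
    have : θ (C f) = 0 := hIker hCf
    have hθf : θ (C f) = δ f := by
      simp only [hθ, RingHom.comp_apply, coe_evalRingHom, eval_C]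
    rw [hθf] at this
    exact Ideal.Quotient.eq_zero_iff_mem.mp this
  · intro h
    obtain ⟨a, b, hab⟩ := Ideal.mem_span_pair.mp h
    have : (C f : Polynomial P) = C a * C (((p:ℕ) : P) * g) + C b * C (g^2 - ((p:ℕ) : P) * (u * u'^2)) := by
      rw [← map_mul, ← map_mul, ← map_add]
      exact congrArg C hab.symm
    rw [this, map_add mkI, map_mul mkI, map_mul mkI]
    have e1 : mkI (C (((p:ℕ) : P) * g)) = 0 := hJ1
    have e2 : mkI (C (g^2 - ((p:ℕ) : P) * (u * u'^2))) = 0 := hJ2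
    rw [e1, e2]
    ring


end Aux2

/-- Proposition 4.5 (1): if `σ : R₁ → R₂` is a ring isomorphism, where
`Rᵢ = ℤ_{p²}[X,Y]/(gᵢ(X) − u_{i+2}(X)Y, Y² − p·uᵢ(X), pY)`, then `σ` induces a field
isomorphism `τ : K₁ → K₂` of the residue fields `Kᵢ = ℤ_{p²}[X]/(p, gᵢ)` (commuting
with the residue maps), and there exist `v₂(X), u₅(X) ∉ (p, g₂(X))` such that
`σ(g₁(X)) = u₅(X)·g₂(X)` in `R₂` and `u₂(X) = v₂(X)² · τ(u₁(X))` in `K₂`. -/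
theorem paperRingR_iso_implies_of_mixed
    (p : ℕ) (hp : p.Prime)
    (g₁ g₂ u₁ u₂ u₃ u₄ : Polynomial (ZMod (p ^ 2)))
    (hg₁coeff : ∀ k, (g₁.coeff k).val < p) (hg₂coeff : ∀ k, (g₂.coeff k).val < p)
    (hu₁coeff : ∀ k, (u₁.coeff k).val < p) (hu₂coeff : ∀ k, (u₂.coeff k).val < p)
    (hu₃coeff : ∀ k, (u₃.coeff k).val < p) (hu₄coeff : ∀ k, (u₄.coeff k).val < p)
    (hg₁ : g₁.Monic) (hg₂ : g₂.Monic)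
    (hg₁irr : Irreducible
      (g₁.map (ZMod.castHom (dvd_pow_self p (by norm_num : (2:ℕ) ≠ 0)) (ZMod p))))
    (hg₂irr : Irreducible
      (g₂.map (ZMod.castHom (dvd_pow_self p (by norm_num : (2:ℕ) ≠ 0)) (ZMod p))))
    (hu₁ : u₁.map (ZMod.castHom (dvd_pow_self p (by norm_num : (2:ℕ) ≠ 0)) (ZMod p)) ≠ 0)
    (hu₂ : u₂.map (ZMod.castHom (dvd_pow_self p (by norm_num : (2:ℕ) ≠ 0)) (ZMod p)) ≠ 0)
    (hu₃ : u₃.map (ZMod.castHom (dvd_pow_self p (by norm_num : (2:ℕ) ≠ 0)) (ZMod p)) ≠ 0)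
    (hu₄ : u₄.map (ZMod.castHom (dvd_pow_self p (by norm_num : (2:ℕ) ≠ 0)) (ZMod p)) ≠ 0)
    (hu₁deg : u₁.degree < g₁.degree) (hu₃deg : u₃.degree < g₁.degree)
    (hu₂deg : u₂.degree < g₂.degree) (hu₄deg : u₄.degree < g₂.degree)
    (σ : (Polynomial (Polynomial (ZMod (p ^ 2))) ⧸ paperIdealI p g₁ u₃ u₁) ≃+*
      (Polynomial (Polynomial (ZMod (p ^ 2))) ⧸ paperIdealI p g₂ u₄ u₂)) :
    ∃ τ : (Polynomial (ZMod (p ^ 2)) ⧸ paperIdealK p g₁) ≃+*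
        (Polynomial (ZMod (p ^ 2)) ⧸ paperIdealK p g₂),
      (∀ a b : Polynomial (Polynomial (ZMod (p ^ 2))),
        σ (Ideal.Quotient.mk (paperIdealI p g₁ u₃ u₁) a) =
          Ideal.Quotient.mk (paperIdealI p g₂ u₄ u₂) b →
        τ (paperKappa p g₁ a) = paperKappa p g₂ b) ∧
      ∃ v₂ u₅ : Polynomial (ZMod (p ^ 2)),
        v₂ ∉ paperIdealK p g₂ ∧ u₅ ∉ paperIdealK p g₂ ∧
        σ (Ideal.Quotient.mk (paperIdealI p g₁ u₃ u₁) (Polynomial.C g₁)) =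
          Ideal.Quotient.mk (paperIdealI p g₂ u₄ u₂) (Polynomial.C u₅ * Polynomial.C g₂) ∧
        Ideal.Quotient.mk (paperIdealK p g₂) u₂ =
          (Ideal.Quotient.mk (paperIdealK p g₂) v₂) ^ 2 *
            τ (Ideal.Quotient.mk (paperIdealK p g₁) u₁) := by
  classical
  obtain ⟨y1, E11, E21⟩ := auxModel p hp g₁ u₁ u₃ hg₁ hg₁irr hu₃ hu₃deg
  obtain ⟨y2, E12, E22⟩ := auxModel p hp g₂ u₂ u₄ hg₂ hg₂irr hu₄ hu₄deg
  set mk1 := Ideal.Quotient.mk (paperIdealI p g₁ u₃ u₁) with hmk1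
  set mk2 := Ideal.Quotient.mk (paperIdealI p g₂ u₄ u₂) with hmk2
  set mkK1 := Ideal.Quotient.mk (paperIdealK p g₁) with hmkK1
  set mkK2 := Ideal.Quotient.mk (paperIdealK p g₂) with hmkK2
  -- K-level membership facts
  have hpK2mem : ((p:ℕ) : Polynomial (ZMod (p^2))) ∈ paperIdealK p g₂ := by
    rw [paperIdealK]; exact Ideal.subset_span (by simp)
  have hpK1mem : ((p:ℕ) : Polynomial (ZMod (p^2))) ∈ paperIdealK p g₁ := by
    rw [paperIdealK]; exact Ideal.subset_span (by simp)
  have hg2K2 : g₂ ∈ paperIdealK p g₂ := by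
    rw [paperIdealK]; exact Ideal.subset_span (by simp)
  have hg1K1 : g₁ ∈ paperIdealK p g₁ := by
    rw [paperIdealK]; exact Ideal.subset_span (by simp)
  have hpK2 : ((p:ℕ) : Polynomial (ZMod (p^2)) ⧸ paperIdealK p g₂) = 0 := by
    rw [← map_natCast mkK2]; exact Ideal.Quotient.eq_zero_iff_mem.mpr hpK2mem
  -- kappa unfolding
  have hκ : ∀ (g : Polynomial (ZMod (p^2))) (a : Polynomial (Polynomial (ZMod (p^2)))),
      paperKappa p g a = Ideal.Quotient.mk (paperIdealK p g) (a.eval 0) := fun g a => rfl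
  -- the residue map π₂
  have hker2 : ∀ a ∈ paperIdealI p g₂ u₄ u₂, paperKappa p g₂ a = 0 := by
    have hle : paperIdealI p g₂ u₄ u₂ ≤ RingHom.ker (paperKappa p g₂) := by
      rw [paperIdealI, Ideal.span_le]
      intro x hx
      simp only [Set.mem_insert_iff, Set.mem_singleton_iff] at hx
      rcases hx with rfl | rfl | rfl <;> rw [SetLike.mem_coe, RingHom.mem_ker, hκ]
      · simp only [eval_sub, eval_mul, eval_C, eval_X, mul_zero, sub_zero]
        exact Ideal.Quotient.eq_zero_iff_mem.mpr hg2K2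
      · simp only [eval_sub, eval_pow, eval_X, eval_mul, eval_natCast, eval_C]
        rw [show (0:Polynomial (ZMod (p^2)))^2 - ((p:ℕ) : Polynomial (ZMod (p^2)))*u₂
            = (-u₂) * ((p:ℕ) : Polynomial (ZMod (p^2))) from by ring,
          map_mul, map_natCast, hpK2, mul_zero]
      · simp only [eval_mul, eval_natCast, eval_X, mul_zero, map_zero]
    exact fun a ha => RingHom.mem_ker.mp (hle ha)
  set π₂ := Ideal.Quotient.lift (paperIdealI p g₂ u₄ u₂) (paperKappa p g₂) hker2 with hπ₂
  have hπmk : ∀ w, π₂ (mk2 w) = mkK2 (w.eval 0) := fun w => by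
    rw [hπ₂, hmk2, Ideal.Quotient.lift_mk, hκ, hmkK2]
  -- τ0
  set σh := (σ : (Polynomial (Polynomial (ZMod (p ^ 2))) ⧸ paperIdealI p g₁ u₃ u₁) →+*
      (Polynomial (Polynomial (ZMod (p ^ 2))) ⧸ paperIdealI p g₂ u₄ u₂)) with hσh
  set τ0 : Polynomial (ZMod (p^2)) →+* (Polynomial (ZMod (p^2)) ⧸ paperIdealK p g₂) :=
    (π₂.comp σh).comp (mk1.comp (C : Polynomial (ZMod (p^2)) →+* Polynomial (Polynomial (ZMod (p^2))))) with hτ0def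
  have hτ0 : ∀ f, τ0 f = π₂ (σh (mk1 (C f))) := fun f => rfl
  have hτ0p : τ0 ((p:ℕ) : Polynomial (ZMod (p^2))) = 0 := by
    rw [hτ0, map_natCast (C : Polynomial (ZMod (p^2)) →+* Polynomial (Polynomial (ZMod (p^2)))),
      map_natCast mk1, map_natCast σh, map_natCast π₂]
    exact hpK2
  -- cube-zero elements
  have q21 : (mk1 X)^2 = ((p:ℕ) : _) * mk1 (C u₁) := by
    have h0 : mk1 (X^2 - ((p:ℕ) : Polynomial (Polynomial (ZMod (p^2)))) * C u₁) = 0 := by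
      apply Ideal.Quotient.eq_zero_iff_mem.mpr
      rw [paperIdealI]; exact Ideal.subset_span (by simp)
    rw [map_sub, map_mul, map_pow, map_natCast] at h0
    exact sub_eq_zero.mp h0
  have q31 : ((p:ℕ) : _) * mk1 X = 0 := by
    have h0 : mk1 (((p:ℕ) : Polynomial (Polynomial (ZMod (p^2)))) * X) = 0 := by
      apply Ideal.Quotient.eq_zero_iff_mem.mpr
      rw [paperIdealI]; exact Ideal.subset_span (by simp)
    rwa [map_mul, map_natCast] at h0
  have hX3 : (mk1 X)^3 = 0 := by
    linear_combination (mk1 X) * q21 + (mk1 (C u₁)) * q31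
  have hg13 : g₁^3 ∈ Ideal.span {((p:ℕ) : Polynomial (ZMod (p^2)))*g₁,
      g₁^2 - ((p:ℕ) : Polynomial (ZMod (p^2)))*(u₁*u₃^2)} :=
    Ideal.mem_span_pair.mpr ⟨u₁*u₃^2, g₁, by ring⟩
  have hCg13 : (mk1 (C g₁))^3 = 0 := by
    rw [← map_pow, ← map_pow]; exact (E21 _).mpr hg13
  have hτ0g : τ0 g₁ = 0 := by
    have hz : (σh (mk1 (C g₁)))^3 = 0 := by rw [← map_pow, hCg13, map_zero]
    have h3 : (τ0 g₁)^3 = 0 := by rw [hτ0, ← map_pow, hz, map_zero]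
    exact auxCube p hp g₂ hg₂ hg₂irr _ h3
  -- τ as a ring hom on K₁
  have hkerτ : ∀ x ∈ paperIdealK p g₁, τ0 x = 0 := by
    have hle : paperIdealK p g₁ ≤ RingHom.ker τ0 := by
      rw [paperIdealK, Ideal.span_le]
      intro x hx
      simp only [Set.mem_insert_iff, Set.mem_singleton_iff] at hx
      rcases hx with rfl | rfl <;> rw [SetLike.mem_coe, RingHom.mem_ker]
      · exact hτ0p
      · exact hτ0g
    exact fun x hx => RingHom.mem_ker.mp (hle hx)
  set τh := Ideal.Quotient.lift (paperIdealK p g₁) τ0 hkerτ with hτh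
  have hτmk : ∀ f, τh (mkK1 f) = τ0 f := fun f => by
    rw [hτh, hmkK1, Ideal.Quotient.lift_mk]
  have hone2 : (1 : Polynomial (ZMod (p^2))) ∉ paperIdealK p g₂ := by
    rw [paperIdealK]; exact auxOneNotMem p hp g₂ hg₂irr
  have hone1 : (1 : Polynomial (ZMod (p^2))) ∉ paperIdealK p g₁ := by
    rw [paperIdealK]; exact auxOneNotMem p hp g₁ hg₁irr
  have hinj : Function.Injective τh := by
    rw [injective_iff_map_eq_zero]
    intro a ha
    obtain ⟨f, rfl⟩ := Ideal.Quotient.mk_surjective a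
    by_contra hne
    have hfK : f ∉ paperIdealK p g₁ := fun h =>
      hne (Ideal.Quotient.eq_zero_iff_mem.mpr h)
    have hnd : ¬ (g₁.map (ZMod.castHom (dvd_pow_self p two_ne_zero) (ZMod p))) ∣
        (f.map (ZMod.castHom (dvd_pow_self p two_ne_zero) (ZMod p))) := by
      intro hd
      exact hfK (by rw [paperIdealK]; exact (auxMemSpanIffDvd p hp g₁ f).mpr hd)
    obtain ⟨A, B, hAB⟩ := auxBezout p hp f g₁ (auxCoprime p hp g₁ f hg₁irr hnd)
    have h1 : τ0 (f*A + g₁*B) = 1 := by rw [hAB, map_one]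
    rw [map_add, map_mul, map_mul, hτ0g, ← hτmk, ha, zero_mul, zero_mul, add_zero] at h1
    refine hone2 (Ideal.Quotient.eq_zero_iff_mem.mp (?_ : mkK2 1 = 0))
    rw [map_one]; exact h1.symm
  have hsurj : Function.Surjective τh := by
    intro y
    obtain ⟨f₂, rfl⟩ := Ideal.Quotient.mk_surjective y
    obtain ⟨F, hF⟩ := Ideal.Quotient.mk_surjective (σ.symm (mk2 (C f₂)))
    refine ⟨mkK1 (F.eval y1), ?_⟩
    rw [hτmk, hτ0]
    have : mk1 (C (F.eval y1)) = σ.symm (mk2 (C f₂)) := by rw [← E11, hF]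
    rw [this]
    have hss : σh (σ.symm (mk2 (C f₂))) = mk2 (C f₂) := σ.apply_symm_apply _
    rw [hss, hπmk, eval_C]
  set τ : (Polynomial (ZMod (p ^ 2)) ⧸ paperIdealK p g₁) ≃+*
      (Polynomial (ZMod (p ^ 2)) ⧸ paperIdealK p g₂) :=
    RingEquiv.ofBijective τh ⟨hinj, hsurj⟩ with hτ
  have hτapp : ∀ x, τ x = τh x := fun x => rfl
  refine ⟨τ, ?_, ?_⟩
  · -- commuting with the residue maps
    intro a b hab
    rw [hκ, hκ, ← hmkK1, ← hmkK2, hτapp, hτmk, hτ0]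
    have hd : (X : Polynomial (Polynomial (ZMod (p^2)))) ∣ (a - C (a.eval 0)) := by
      rw [X_dvd_iff]
      simp [coeff_sub, coeff_zero_eq_eval_zero]
    obtain ⟨q, hq⟩ := hd
    have hsplit : mk1 a = mk1 (C (a.eval 0)) + mk1 X * mk1 q := by
      rw [← map_mul, ← map_add]
      congr 1
      linear_combination hq
    have hXz : π₂ (σh (mk1 X)) = 0 := by
      apply auxCube p hp g₂ hg₂ hg₂irr
      rw [← map_pow, ← map_pow, hX3, map_zero, map_zero]
    have h2 : π₂ (σh (mk1 a)) = π₂ (σh (mk1 (C (a.eval 0)))) := by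
      rw [hsplit, map_add, map_mul, map_add, map_mul, hXz, zero_mul, add_zero]
    rw [← h2, show σh (mk1 a) = mk2 b from hab, hπmk]
  · -- existence of v₂ and u₅
    have hp2 : ((p:ℕ) : Polynomial (ZMod (p^2)))^2 = 0 := auxPsqP p
    have E22' : ∀ a' b' : Polynomial (ZMod (p^2)), mk2 (C a') = mk2 (C b') ↔
        a' - b' ∈ Ideal.span {((p:ℕ) : Polynomial (ZMod (p^2)))*g₂,
          g₂^2 - ((p:ℕ) : Polynomial (ZMod (p^2)))*(u₂*u₄^2)} := by
      intro a' b'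
      rw [← sub_eq_zero, ← map_sub, ← map_sub]
      exact E22 _
    obtain ⟨F, hF⟩ := Ideal.Quotient.mk_surjective (σh (mk1 (C g₁)))
    set f := F.eval y2 with hfdef
    have ht : σh (mk1 (C g₁)) = mk2 (C f) := by rw [← hF, E12]
    have hpg1J : ((p:ℕ) : Polynomial (ZMod (p^2)))*g₁ ∈
        Ideal.span {((p:ℕ) : Polynomial (ZMod (p^2)))*g₁,
          g₁^2 - ((p:ℕ) : Polynomial (ZMod (p^2)))*(u₁*u₃^2)} :=
      Ideal.subset_span (by simp)
    have hpf : ((p:ℕ) : Polynomial (ZMod (p^2))) * f ∈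
        Ideal.span {((p:ℕ) : Polynomial (ZMod (p^2)))*g₂,
          g₂^2 - ((p:ℕ) : Polynomial (ZMod (p^2)))*(u₂*u₄^2)} := by
      apply (E22 _).mp
      have h1 : (C (((p:ℕ) : Polynomial (ZMod (p^2))) * f) :
          Polynomial (Polynomial (ZMod (p^2)))) =
          ((p:ℕ) : Polynomial (Polynomial (ZMod (p^2)))) * C f := by
        rw [map_mul, map_natCast]
      rw [h1, map_mul, map_natCast, ← ht]
      calc ((p:ℕ) : _) * σh (mk1 (C g₁))
          = σh (((p:ℕ) : _) * mk1 (C g₁)) := by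
            simp only [map_mul, map_natCast]; congr 1; exact (map_natCast σh p).symm
        _ = σh (mk1 (((p:ℕ) : _) * C g₁)) := by
            simp only [map_mul, map_natCast]; congr 1; exact map_natCast σh p
        _ = σh (mk1 (C (((p:ℕ) : Polynomial (ZMod (p^2))) * g₁))) := by
            simp only [map_mul, map_natCast]
        _ = 0 := by rw [(E21 _).mpr hpg1J, map_zero]
    obtain ⟨G2F, hG2F⟩ := Ideal.Quotient.mk_surjective (σh (mk1 (C (u₁*u₃^2))))
    set e := G2F.eval y2 with hedef
    have hz : σh (mk1 (C (u₁*u₃^2))) = mk2 (C e) := by rw [← hG2F, E12]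
    have hsq : f^2 - ((p:ℕ) : Polynomial (ZMod (p^2))) * e ∈
        Ideal.span {((p:ℕ) : Polynomial (ZMod (p^2)))*g₂,
          g₂^2 - ((p:ℕ) : Polynomial (ZMod (p^2)))*(u₂*u₄^2)} := by
      apply (E22' _ _).mp
      have h1 : mk2 (C (f^2)) = σh (mk1 (C (g₁^2))) := by
        rw [map_pow (C : Polynomial (ZMod (p^2)) →+* _), map_pow mk2, ← ht,
          ← map_pow σh, ← map_pow mk1, ← map_pow (C : Polynomial (ZMod (p^2)) →+* _)]
      have h2 : mk1 (C (g₁^2)) =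
          mk1 (C (((p:ℕ) : Polynomial (ZMod (p^2)))*(u₁*u₃^2))) := by
        rw [← sub_eq_zero, ← map_sub, ← map_sub]
        exact (E21 _).mpr (Ideal.subset_span (by simp))
      have h3 : mk2 (C (f^2)) = mk2 (C (((p:ℕ) : Polynomial (ZMod (p^2))) * e)) := by
        rw [h1, h2]
        calc σh (mk1 (C (((p:ℕ) : Polynomial (ZMod (p^2)))*(u₁*u₃^2))))
            = σh (mk1 (((p:ℕ) : _) * C (u₁*u₃^2))) := by rw [map_mul, map_natCast]
          _ = ((p:ℕ) : _) * σh (mk1 (C (u₁*u₃^2))) := by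
              rw [map_mul, map_natCast, map_mul, map_natCast]
          _ = ((p:ℕ) : _) * mk2 (C e) := by rw [hz]
          _ = mk2 (C (((p:ℕ) : Polynomial (ZMod (p^2))) * e)) := by
              rw [map_mul, map_natCast, map_mul, map_natCast]
      exact h3
    have hfspan : f ∈ Ideal.span {((p:ℕ) : Polynomial (ZMod (p^2))), g₂} :=
      auxJmemSpan p hp g₂ (u₂*u₄^2) f hg₂ hpf
    obtain ⟨a, b, hfab⟩ := Ideal.mem_span_pair.mp hfspan
    have hf2 : f^2 - ((p:ℕ) : Polynomial (ZMod (p^2)))*(b^2*(u₂*u₄^2)) ∈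
        Ideal.span {((p:ℕ) : Polynomial (ZMod (p^2)))*g₂,
          g₂^2 - ((p:ℕ) : Polynomial (ZMod (p^2)))*(u₂*u₄^2)} :=
      Ideal.mem_span_pair.mpr ⟨2*a*b, b^2, by
        linear_combination (f + a*((p:ℕ) : Polynomial (ZMod (p^2))) + b*g₂)*hfab - a^2*hp2⟩
    have hbe : b^2*(u₂*u₄^2) - e ∈ Ideal.span {((p:ℕ) : Polynomial (ZMod (p^2))), g₂} := by
      apply auxJmemSpan p hp g₂ (u₂*u₄^2) _ hg₂
      have h1 : ((p:ℕ) : Polynomial (ZMod (p^2))) * (b^2*(u₂*u₄^2) - e) =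
          (f^2 - ((p:ℕ) : Polynomial (ZMod (p^2)))*e) -
          (f^2 - ((p:ℕ) : Polynomial (ZMod (p^2)))*(b^2*(u₂*u₄^2))) := by ring
      rw [h1]
      exact Ideal.sub_mem _ hsq hf2
    have hw1K : (u₁*u₃^2) ∉ paperIdealK p g₁ := by
      rw [paperIdealK]
      exact auxWNotMem p hp g₁ u₁ u₃ hg₁ hg₁irr hu₁ hu₃ hu₁deg hu₃deg
    have hKe : mkK2 e = τh (mkK1 (u₁*u₃^2)) := by
      rw [hτmk, hτ0, hz, hπmk, eval_C]
    have hene : mkK2 e ≠ 0 := by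
      rw [hKe]
      intro h0
      have h1 : mkK1 (u₁*u₃^2) = 0 := hinj (by rw [map_zero]; exact h0)
      exact hw1K (Ideal.Quotient.eq_zero_iff_mem.mp h1)
    have heK : e ∉ Ideal.span {((p:ℕ) : Polynomial (ZMod (p^2))), g₂} := fun h =>
      hene (Ideal.Quotient.eq_zero_iff_mem.mpr (by rw [paperIdealK]; exact h))
    have hbK : b ∉ Ideal.span {((p:ℕ) : Polynomial (ZMod (p^2))), g₂} := by
      intro hb
      apply heK
      have h1 : b^2*(u₂*u₄^2) ∈ Ideal.span {((p:ℕ) : Polynomial (ZMod (p^2))), g₂} := by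
        rw [show b^2*(u₂*u₄^2) = b * (b*(u₂*u₄^2)) from by ring]
        exact Ideal.mul_mem_right _ _ hb
      rw [show e = b^2*(u₂*u₄^2) - (b^2*(u₂*u₄^2) - e) from by ring]
      exact Ideal.sub_mem _ h1 hbe
    have hw2nd : ¬ (g₂.map (ZMod.castHom (dvd_pow_self p two_ne_zero) (ZMod p))) ∣
        ((u₂*u₄^2).map (ZMod.castHom (dvd_pow_self p two_ne_zero) (ZMod p))) := by
      intro hd
      exact (auxWNotMem p hp g₂ u₂ u₄ hg₂ hg₂irr hu₂ hu₄ hu₂deg hu₄deg)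
        ((auxMemSpanIffDvd p hp g₂ _).mpr hd)
    obtain ⟨m, n, hmn⟩ := auxBezout p hp (u₂*u₄^2) g₂ (auxCoprime p hp g₂ _ hg₂irr hw2nd)
    have hu₅g : (b + a*m*g₂)*g₂ - f ∈
        Ideal.span {((p:ℕ) : Polynomial (ZMod (p^2)))*g₂,
          g₂^2 - ((p:ℕ) : Polynomial (ZMod (p^2)))*(u₂*u₄^2)} :=
      Ideal.mem_span_pair.mpr ⟨-(a*n), a*m, by
        linear_combination -hfab - a*((p:ℕ) : Polynomial (ZMod (p^2)))*hmn⟩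
    have hu₅K : (b + a*m*g₂) ∉ Ideal.span {((p:ℕ) : Polynomial (ZMod (p^2))), g₂} := by
      intro h
      apply hbK
      rw [show b = (b + a*m*g₂) - a*m*g₂ from by ring]
      exact Ideal.sub_mem _ h (Ideal.mul_mem_left _ _ (Ideal.subset_span (by simp)))
    have hσg₁ : σh (mk1 (C g₁)) = mk2 (C (b + a*m*g₂) * C g₂) := by
      rw [ht, ← map_mul]
      exact ((E22' ((b + a*m*g₂)*g₂) f).mpr hu₅g).symm
    have hbu₄nd : ¬ (g₂.map (ZMod.castHom (dvd_pow_self p two_ne_zero) (ZMod p))) ∣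
        ((b*u₄).map (ZMod.castHom (dvd_pow_self p two_ne_zero) (ZMod p))) := by
      rw [Polynomial.map_mul]
      intro hd
      rcases (auxPrimeMap p hp g₂ hg₂irr).dvd_mul.mp hd with h' | h'
      · exact hbK ((auxMemSpanIffDvd p hp g₂ b).mpr h')
      · exact auxNotDvd p hp g₂ u₄ hg₂ hu₄ hu₄deg h'
    obtain ⟨A, B, hABz⟩ := auxBezout p hp (b*u₄) g₂ (auxCoprime p hp g₂ _ hg₂irr hbu₄nd)
    obtain ⟨T₃, hT₃⟩ := Ideal.Quotient.mk_surjective (τh (mkK1 u₃))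
    have hg₂K0 : mkK2 g₂ = 0 := Ideal.Quotient.eq_zero_iff_mem.mpr hg2K2
    have hABK : mkK2 b * mkK2 u₄ * mkK2 A = 1 := by
      have h0 := congrArg mkK2 hABz
      rw [map_add, map_mul, map_mul, map_mul, map_one, hg₂K0, zero_mul, add_zero] at h0
      linear_combination h0
    refine ⟨T₃ * A, b + a*m*g₂, ?_, ?_, ?_, ?_⟩
    · -- v₂ not in (p, g₂)
      intro hv
      have hv0 : mkK2 (T₃*A) = 0 := Ideal.Quotient.eq_zero_iff_mem.mpr hv
      have hT0 : τh (mkK1 u₃) = 0 := by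
        rw [← hT₃]
        have h2 : mkK2 T₃ = mkK2 (T₃*A) * (mkK2 b * mkK2 u₄) := by
          rw [map_mul]
          linear_combination (-(mkK2 T₃))*hABK
        rw [h2, hv0, zero_mul]
      have hu₃K : u₃ ∉ paperIdealK p g₁ := by
        rw [paperIdealK]
        exact auxUNotMem p hp g₁ u₃ hg₁ hg₁irr hu₃ hu₃deg
      exact hu₃K (Ideal.Quotient.eq_zero_iff_mem.mp (hinj (by rw [map_zero]; exact hT0)))
    · -- u₅ not in (p, g₂)
      intro h
      apply hu₅K
      rw [paperIdealK] at h
      exact h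
    · exact hσg₁
    · -- the square identity in K₂
      have hEq : (mkK2 b)^2 * (mkK2 u₂ * (mkK2 u₄)^2) = τh (mkK1 u₁) * (mkK2 T₃)^2 := by
        have h0 : mkK2 (b^2*(u₂*u₄^2)) = mkK2 e := by
          rw [← sub_eq_zero, ← map_sub]
          exact Ideal.Quotient.eq_zero_iff_mem.mpr (by rw [paperIdealK]; exact hbe)
        rw [hKe] at h0
        have hL : mkK2 (b^2*(u₂*u₄^2)) = (mkK2 b)^2 * (mkK2 u₂ * (mkK2 u₄)^2) := by
          rw [map_mul, map_pow, map_mul, map_pow]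
        have hR : τh (mkK1 (u₁*u₃^2)) = τh (mkK1 u₁) * (mkK2 T₃)^2 := by
          rw [map_mul, map_pow, map_mul, map_pow, hT₃]
        rw [hL, hR] at h0
        exact h0
      rw [hτapp, map_mul]
      linear_combination (-(mkK2 u₂)*(1 + mkK2 A*mkK2 b*mkK2 u₄))*hABK + (mkK2 A)^2*hEq
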